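/- (Explicit eigenfunction of the two-particle fiber operator.) Let μ ≠ 0, k ∈ T^d and let z ∈ ℝ \ [E_min(k), E_max(k)] satisfy Δ_μ(k;z) = 0. Then the function f(p) = (𝓔_k(p) − z)^{-1} belongs to L²(T^d, η), is nonzero, satisfies f(k−p) = f(p) for all p (i.e. f is an even function of the relative momentum), and h_μ(k)f = z f. -/

import Mathlib

open MeasureTheory Real Filter

noncomputable section

instance fact_two_pi_pos : Fact (0 < 2 * Real.pi) := ⟨by positivity⟩

/-- The `d`-dimensional torus `(ℝ/2πℤ)^d`. -/
abbrev Torus (d : ℕ) : Type := Fin d → AddCircle (2 * Real.pi)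

/-- Cosine as a function on the circle `ℝ/2πℤ`. -/
noncomputable def torusCos : AddCircle (2 * Real.pi) → ℝ := Real.cos_periodic.lift

/-- The one-particle dispersion `ε(p) = 2∑ᵢ (1 − cos pⁱ)` on the torus. -/
noncomputable def eps (d : ℕ) (p : Torus d) : ℝ := 2 * ∑ i, (1 - torusCos (p i))

/-- The normalized Haar measure `η` on the torus `T^d`. -/
noncomputable def η (d : ℕ) : Measure (Torus d) :=
  Measure.pi fun _ => (AddCircle.haarAddCircle : Measure (AddCircle (2 * Real.pi)))

instance (d : ℕ) : IsProbabilityMeasure (η d) := by unfold η; infer_instance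

/-- The two-particle fiber dispersion `𝓔ₖ(p) = ε(k−p) + ε(p)`. -/
noncomputable def calE (d : ℕ) (k p : Torus d) : ℝ := eps d (k - p) + eps d p

/-- `E_min(k) = min_{p ∈ T^d} 𝓔ₖ(p)`. -/
noncomputable def Emin (d : ℕ) (k : Torus d) : ℝ := sInf (Set.range (calE d k))

/-- `E_max(k) = max_{p ∈ T^d} 𝓔ₖ(p)`. -/
noncomputable def Emax (d : ℕ) (k : Torus d) : ℝ := sSup (Set.range (calE d k))

/-- The three-particle dispersion `E(K;p,q) = ε(K−p−q) + ε(p) + ε(q)`. -/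
noncomputable def EE (d : ℕ) (K p q : Torus d) : ℝ := eps d (K - p - q) + eps d p + eps d q

/-- `E_min(K) = min_{p,q ∈ T^d} E(K;p,q)`. -/
noncomputable def E3min (d : ℕ) (K : Torus d) : ℝ :=
  sInf (Set.range fun pq : Torus d × Torus d => EE d K pq.1 pq.2)

/-- `E_max(K) = max_{p,q ∈ T^d} E(K;p,q)`. -/
noncomputable def E3max (d : ℕ) (K : Torus d) : ℝ :=
  sSup (Set.range fun pq : Torus d × Torus d => EE d K pq.1 pq.2)

/-- The two-particle determinant `Δ_μ(k;z) = 1 + μ ∫ (𝓔ₖ(q) − z)⁻¹ dη(q)`. -/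
noncomputable def Delta2 (d : ℕ) (μ : ℝ) (k : Torus d) (z : ℝ) : ℝ :=
  1 + μ * ∫ q, (calE d k q - z)⁻¹ ∂(η d)

/-- The channel determinant `Δ_μ(K,p;z) = 1 + μ ∫ (E(K;p,q) − z)⁻¹ dη(q)`. -/
noncomputable def Delta3 (d : ℕ) (μ : ℝ) (K p : Torus d) (z : ℝ) : ℝ :=
  1 + μ * ∫ q, (EE d K p q - z)⁻¹ ∂(η d)

/-- The point `π ∈ ℝ/2πℤ`. -/
noncomputable def piPt : AddCircle (2 * Real.pi) := ((Real.pi : ℝ) : AddCircle (2 * Real.pi))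


lemma torusCos_mem (x : AddCircle (2 * Real.pi)) : torusCos x ∈ Set.Icc (-1 : ℝ) 1 := by
  induction x using QuotientAddGroup.induction_on with
  | H r =>
    have : torusCos ((r : ℝ) : AddCircle (2 * Real.pi)) = Real.cos r :=
      Function.Periodic.lift_coe _ _
    rw [this]
    exact ⟨Real.neg_one_le_cos r, Real.cos_le_one r⟩

lemma continuous_torusCos : Continuous torusCos :=
  Real.continuous_cos.quotient_liftOn' _

lemma continuous_eps (d : ℕ) : Continuous (eps d) := by
  unfold eps
  exact continuous_const.mul (continuous_finset_sum _ fun i _ =>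
    continuous_const.sub (continuous_torusCos.comp (continuous_apply i)))

lemma continuous_calE (d : ℕ) (k : Torus d) : Continuous (calE d k) := by
  unfold calE
  exact ((continuous_eps d).comp (continuous_const.sub continuous_id)).add (continuous_eps d)

lemma eps_bounds (d : ℕ) (p : Torus d) : 0 ≤ eps d p ∧ eps d p ≤ 4 * d := by
  unfold eps
  constructor
  · have : (0:ℝ) ≤ ∑ i, (1 - torusCos (p i)) :=
      Finset.sum_nonneg fun i _ => by have := (torusCos_mem (p i)).2; linarith
    linarith
  · have : ∑ i, (1 - torusCos (p i)) ≤ ∑ _i : Fin d, (2:ℝ) :=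
      Finset.sum_le_sum fun i _ => by have := (torusCos_mem (p i)).1; linarith
    simp only [Finset.sum_const, Finset.card_univ, Fintype.card_fin, nsmul_eq_mul] at this
    linarith

lemma calE_mem (d : ℕ) (k p : Torus d) : calE d k p ∈ Set.Icc (Emin d k) (Emax d k) := by
  have hbdA : BddAbove (Set.range (calE d k)) := by
    refine ⟨8 * d, fun x ⟨q, hq⟩ => ?_⟩
    have h1 := eps_bounds d (k - q); have h2 := eps_bounds d q
    simp only [← hq, calE]; linarith
  have hbdB : BddBelow (Set.range (calE d k)) := by
    refine ⟨0, fun x ⟨q, hq⟩ => ?_⟩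
    have h1 := eps_bounds d (k - q); have h2 := eps_bounds d q
    simp only [← hq, calE]; linarith
  exact ⟨csInf_le hbdB ⟨p, rfl⟩, le_csSup hbdA ⟨p, rfl⟩⟩

/-- if `Δ_μ(k;z) = 0` for `z ∉ [E_min(k), E_max(k)]`, then
`f(p) = (𝓔ₖ(p) − z)⁻¹` is a nonzero even element of `L²(T^d,η)` satisfying
`h_μ(k) f = z f` pointwise. -/
theorem explicit_eigenfunction (d : ℕ) (μ : ℝ) (hμ : μ ≠ 0) (k : Torus d) (z : ℝ)
    (hz : z ∉ Set.Icc (Emin d k) (Emax d k)) (hΔ : Delta2 d μ k z = 0) :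
    MemLp (fun p => (calE d k p - z)⁻¹) 2 (η d) ∧
    ¬ ((fun p => (calE d k p - z)⁻¹) =ᵐ[η d] 0) ∧
    (∀ p : Torus d, (calE d k (k - p) - z)⁻¹ = (calE d k p - z)⁻¹) ∧
    (∀ p : Torus d,
      calE d k p * (calE d k p - z)⁻¹ + μ * ∫ q, (calE d k q - z)⁻¹ ∂(η d)
        = z * (calE d k p - z)⁻¹) := by
  -- basic facts
  have hb := calE_mem d k
  have hz' : z < Emin d k ∨ Emax d k < z := by
    rcases lt_or_ge z (Emin d k) with h | h
    · exact Or.inl h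
    · right
      by_contra h2; push_neg at h2
      exact hz ⟨h, h2⟩
  have hne : ∀ p, calE d k p - z ≠ 0 := by
    intro p
    rcases hz' with h | h
    · have := (hb p).1; intro hc; rw [sub_eq_zero] at hc; linarith
    · have := (hb p).2; intro hc; rw [sub_eq_zero] at hc; linarith
  set C : ℝ := max (Emin d k - z)⁻¹ (z - Emax d k)⁻¹ with hC
  have hbd : ∀ p, |(calE d k p - z)⁻¹| ≤ C := by
    intro p
    rcases hz' with h | h
    · have h1 : (0:ℝ) < Emin d k - z := by linarith
      have h2 : Emin d k - z ≤ calE d k p - z := by have := (hb p).1; linarith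
      have h3 : (0:ℝ) < calE d k p - z := lt_of_lt_of_le h1 h2
      rw [abs_of_pos (inv_pos.mpr h3)]
      calc (calE d k p - z)⁻¹ ≤ (Emin d k - z)⁻¹ := by
            rw [← one_div, ← one_div]; exact one_div_le_one_div_of_le h1 h2
        _ ≤ C := le_max_left _ _
    · have h1 : (0:ℝ) < z - Emax d k := by linarith
      have h2 : z - Emax d k ≤ z - calE d k p := by have := (hb p).2; linarith
      have h3 : calE d k p - z < 0 := by linarith
      rw [abs_inv, abs_of_neg h3]
      calc (-(calE d k p - z))⁻¹ = (z - calE d k p)⁻¹ := by ring_nf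
        _ ≤ (z - Emax d k)⁻¹ := by
            rw [← one_div, ← one_div]; exact one_div_le_one_div_of_le h1 h2
        _ ≤ C := le_max_right _ _
  have hcont : Continuous fun p => (calE d k p - z)⁻¹ :=
    ((continuous_calE d k).sub continuous_const).inv₀ hne
  refine ⟨?_, ?_, ?_, ?_⟩
  · exact MemLp.of_bound hcont.aestronglyMeasurable C
      (Filter.Eventually.of_forall fun p => by rw [Real.norm_eq_abs]; exact hbd p)
  · intro h
    have hne' : (η d) ≠ 0 := IsProbabilityMeasure.ne_zero _
    have : (MeasureTheory.ae (η d)).NeBot := ae_neBot.mpr hne'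
    obtain ⟨p, hp⟩ := h.exists
    exact inv_ne_zero (hne p) hp
  · intro p
    have : calE d k (k - p) = calE d k p := by
      simp [calE, sub_sub_cancel, add_comm]
    rw [this]
  · intro p
    have hI : μ * ∫ q, (calE d k q - z)⁻¹ ∂(η d) = -1 := by
      unfold Delta2 at hΔ; linarith
    have h1 : (calE d k p - z) * (calE d k p - z)⁻¹ = 1 := mul_inv_cancel₀ (hne p)
    rw [sub_mul] at h1
    rw [hI]
    linarith
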